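/- For any string X = x_1 x_2 … x_l in which all characters are pairwise distinct (an exemplar string), the string X' = x_1 x_1 x_2 x_2 … x_l x_l obtained by doubling every character satisfies dist_TD(X, X') = l. -/

import Mathlib

variable {α : Type*}

/-- A single tandem duplication: `AXB ⇒ AXXB` with `X` nonempty. -/
def TDStep (S T : List α) : Prop :=
  ∃ A X B : List α, X ≠ [] ∧ S = A ++ X ++ B ∧ T = A ++ X ++ X ++ B

/-- `TDk k S T`: `T` is obtained from `S` by exactly `k` tandem duplications. -/
def TDk : ℕ → List α → List α → Prop
  | 0, S, T => S = T
  | n+1, S, T => ∃ U, TDStep S U ∧ TDk n U T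

/-- The tandem duplication distance, `⊤` if `T` is not reachable from `S`. -/
noncomputable def distTD (S T : List α) : ℕ∞ :=
  sInf {n : ℕ∞ | ∃ m : ℕ, n = m ∧ TDk m S T}

lemma tdstep_prepend (P : List α) {S T : List α} (h : TDStep S T) :
    TDStep (P ++ S) (P ++ T) := by
  obtain ⟨A, Y, B, hY, hS, hT⟩ := h
  exact ⟨P ++ A, Y, B, hY, by simp [hS], by simp [hT]⟩

lemma tdk_prepend (P : List α) : ∀ {k : ℕ} {S T : List α}, TDk k S T →
    TDk k (P ++ S) (P ++ T)
  | 0, S, T, h => by simp [TDk] at h ⊢; rw [h]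
  | n+1, S, T, ⟨U, hU, hT⟩ => ⟨P ++ U, tdstep_prepend P hU, tdk_prepend P hT⟩

lemma tdk_doub (X : List α) : TDk X.length X (X.flatMap fun x => [x, x]) := by
  induction X with
  | nil => simp [TDk]
  | cons a X ih =>
    refine ⟨a :: a :: X, ⟨[], [a], X, by simp, by simp, by simp⟩, ?_⟩
    have := tdk_prepend [a, a] ih
    simpa using this

lemma pair_infix_append {c : α} : ∀ {P Q : List α}, [c, c] <:+: P ++ Q →
    [c, c] <:+: P ∨ [c, c] <:+: Q ∨ ∃ hQ : Q ≠ [], Q.head hQ = c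
  | [], Q, h => Or.inr (Or.inl (by simpa using h))
  | p :: P, Q, h => by
    rw [List.cons_append, List.infix_cons_iff] at h
    rcases h with h | h
    · obtain ⟨t, ht⟩ := h
      simp only [List.cons_append, List.cons.injEq] at ht
      obtain ⟨rfl, ht⟩ := ht
      cases P with
      | nil =>
        cases Q with
        | nil => simp at ht
        | cons q Q =>
          simp only [List.nil_append, List.cons_append, List.cons.injEq] at ht
          exact Or.inr (Or.inr ⟨by simp, ht.1.symm⟩)
      | cons p' P =>
        simp only [List.cons_append, List.cons.injEq] at ht
        obtain ⟨rfl, _⟩ := ht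
        exact Or.inl ⟨[], P, by simp⟩
    · rcases pair_infix_append h with h | h | h
      · exact Or.inl (h.trans (List.suffix_cons p P).isInfix)
      · exact Or.inr (Or.inl h)
      · exact Or.inr (Or.inr h)

lemma tdk_pairs : ∀ {k : ℕ} {S T : List α}, TDk k S T →
    ∃ L : List α, L.length ≤ k ∧ ∀ c, [c, c] <:+: T → [c, c] <:+: S ∨ c ∈ L
  | 0, S, T, h => by
    refine ⟨[], by simp, fun c hc => ?_⟩
    rw [show S = T from h]; exact Or.inl hc
  | n+1, S, T, ⟨U, ⟨A, Y, B, hY, hS, hU⟩, hT⟩ => by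
    obtain ⟨L, hL, hpairs⟩ := tdk_pairs hT
    refine ⟨Y.head hY :: L, by simpa using hL, fun c hc => ?_⟩
    rcases hpairs c hc with h | h
    · rw [hU] at h
      have h' : [c, c] <:+: (A ++ Y) ++ (Y ++ B) := by
        simpa [List.append_assoc] using h
      rcases pair_infix_append h' with h | h | h
      · refine Or.inl ?_
        rw [hS]
        exact h.trans ((A ++ Y).prefix_append B).isInfix
      · refine Or.inl ?_
        rw [hS, List.append_assoc]
        exact h.trans (List.suffix_append A (Y ++ B)).isInfix
      · obtain ⟨hQ, hhead⟩ := h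
        have hc : Y.head hY = c := by
          rw [← hhead]
          cases Y with
          | nil => exact absurd rfl hY
          | cons y Y => simp
        exact Or.inr (hc ▸ List.mem_cons_self)
    · exact Or.inr (List.mem_cons_of_mem _ h)

lemma mem_pair_infix {c : α} {X : List α} (h : c ∈ X) :
    [c, c] <:+: X.flatMap fun x => [x, x] := by
  induction X with
  | nil => simp at h
  | cons a X ih =>
    rcases List.mem_cons.mp h with rfl | h
    · exact ⟨[], X.flatMap fun x => [x, x], by simp⟩
    · exact (ih h).trans ⟨[a, a], [], by simp⟩

/-- Doubling every character of an exemplar string `X` gives a string at tandem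
duplication distance exactly `|X|` from `X`. -/
theorem stmt1 (X : List α) (hX : X.Nodup) :
    distTD X (X.flatMap fun x => [x, x]) = (X.length : ℕ∞) := by
  apply le_antisymm
  · exact sInf_le ⟨X.length, rfl, tdk_doub X⟩
  · refine le_sInf fun n hn => ?_
    obtain ⟨m, rfl, hm⟩ := hn
    refine Nat.cast_le.mpr ?_
    obtain ⟨L, hL, hpairs⟩ := tdk_pairs hm
    have hsub : X ⊆ L := by
      intro c hc
      rcases hpairs c (mem_pair_infix hc) with h | h
      · exfalso
        have := hX.sublist h.sublist
        simp at this
      · exact h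
    exact (hX.subperm hsub).length_le.trans hL
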